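/- arXiv:1104.5529 — 2 statements merged into one kernel-verified Lean document; each statement's English description precedes it below -/
import Mathlib

section
/- Let W(D_{n+1}) be the Weyl group of type D_{n+1} with simple reflections s_1,...,s_{n+1} acting on R^{n+1}, where s_i (for i ≥ 2) is the reflection in e_i - e_{i-1} and s_1 is the reflection in e_1 + e_2. Then the expression w_n = (s_{n+1} s_n ⋯ s_2 s_1)(s_3 s_4 ⋯ s_n s_{n+1}) is a reduced expression; i.e., the length of w_n equals 2n. -/
set_option maxHeartbeats 1600000

/-- Standard basis vectors of `ℝ^∞` (positions `1,…,n+1` are used for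
the type `D_{n+1}` root system). -/
noncomputable def De (a : ℕ) : ℕ → ℝ := fun t => if t = a then 1 else 0

/-- The simple roots of type `D_{n+1}`: `α_1 = e_1 + e_2` and
`α_j = e_j - e_{j-1}` for `2 ≤ j ≤ n+1`. -/
noncomputable def Dalpha (j : ℕ) : ℕ → ℝ :=
  if j = 1 then De 1 + De 2 else De j - De (j - 1)

/-- The simple reflection `s_j` of type `D_{n+1}`, the reflection in the
simple root `α_j` (with respect to the standard inner product on the span
of `e_1, …, e_{n+1}`), as an endomorphism of `ℕ → ℝ`. -/
noncomputable def Ds (n j : ℕ) : Function.End (ℕ → ℝ) := fun v =>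
  v - (∑ i ∈ Finset.range (n + 2), v i * Dalpha j i) • Dalpha j

/-- The word `(s_{n+1} s_n ⋯ s_2 s_1)(s_3 s_4 ⋯ s_n s_{n+1})` for the
element `w_n` of `W(D_{n+1})`. -/
def Dword (n : ℕ) : List ℕ :=
  ((List.range (n + 1)).map (· + 1)).reverse ++ (List.range (n - 1)).map (· + 3)

/-! ### Auxiliary machinery -/

/-- Signed basis vector `Ez z = sign(z) • e_{|z|}`. -/
noncomputable def Ez (z : ℤ) : ℕ → ℝ := fun t =>
  if (t : ℤ) = z then 1 else if (t : ℤ) = -z then -1 else 0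

/-- The action of `s_j` on signed indices. -/
def Dtau (j : ℕ) : Function.End ℤ := fun z =>
  if j = 1 then
    if z = 1 then -2 else if z = -1 then 2 else if z = 2 then -1 else if z = -2 then 1 else z
  else
    if z = (j : ℤ) then (j : ℤ) - 1 else if z = -(j : ℤ) then -((j : ℤ) - 1)
    else if z = (j : ℤ) - 1 then (j : ℤ) else if z = -((j : ℤ) - 1) then -(j : ℤ) else z

lemma Dtau_one (z : ℤ) : Dtau 1 z =
    if z = 1 then -2 else if z = -1 then 2 else if z = 2 then -1 else if z = -2 then 1 else z := by
  simp [Dtau]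

lemma Dtau_ge2 {j : ℕ} (hj : 2 ≤ j) (z : ℤ) : Dtau j z =
    if z = (j : ℤ) then (j : ℤ) - 1 else if z = -(j : ℤ) then -((j : ℤ) - 1)
    else if z = (j : ℤ) - 1 then (j : ℤ) else if z = -((j : ℤ) - 1) then -(j : ℤ) else z := by
  simp only [Dtau]; rw [if_neg (by omega)]

lemma Dtau_odd (j : ℕ) (hj : 1 ≤ j) (z : ℤ) : Dtau j (-z) = -(Dtau j z) := by
  rcases eq_or_ne j 1 with rfl | h
  · simp only [Dtau, if_pos rfl]; split_ifs <;> omega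
  · simp only [Dtau, if_neg h]; split_ifs <;> omega

lemma Dtau_abs {n j : ℕ} (hn : 1 ≤ n) (hj : 1 ≤ j) (hj2 : j ≤ n + 1) (z : ℤ)
    (h1 : 1 ≤ z.natAbs) (h2 : z.natAbs ≤ n + 1) :
    1 ≤ (Dtau j z).natAbs ∧ (Dtau j z).natAbs ≤ n + 1 := by
  rcases eq_or_ne j 1 with rfl | h
  · simp only [Dtau, if_pos rfl]; split_ifs <;> omega
  · simp only [Dtau, if_neg h]; split_ifs <;> omega

lemma Ds_Ez (n j : ℕ) (hj : 1 ≤ j) (hj2 : j ≤ n + 1) (z : ℤ)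
    (h1 : 1 ≤ z.natAbs) (h2 : z.natAbs ≤ n + 1) :
    Ds n j (Ez z) = Ez (Dtau j z) := by
  have hmem : z.natAbs ∈ Finset.range (n + 2) := Finset.mem_range.mpr (by omega)
  have hsum : (∑ i ∈ Finset.range (n + 2), Ez z i * Dalpha j i)
      = Ez z z.natAbs * Dalpha j z.natAbs := by
    apply Finset.sum_eq_single_of_mem _ hmem
    intro i _ hi
    have hz : Ez z i = 0 := by
      simp only [Ez]; split_ifs with p q
      · exfalso; omega
      · exfalso; omega
      · rfl
    rw [hz, zero_mul]
  have hds : Ds n j (Ez z) = Ez z - (Ez z z.natAbs * Dalpha j z.natAbs) • Dalpha j := by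
    simp only [Ds]; rw [hsum]
  rw [hds]
  rcases eq_or_ne j 1 with rfl | hne
  · have hz5 : z = 1 ∨ z = -1 ∨ z = 2 ∨ z = -2 ∨ 3 ≤ z.natAbs := by omega
    rcases hz5 with rfl | rfl | rfl | rfl | hbig
    · have ht : Dtau 1 1 = -2 := by decide
      rw [ht]; funext t
      simp only [Pi.sub_apply, Pi.add_apply, Pi.smul_apply, smul_eq_mul]
      unfold Ez Dalpha De; norm_num
      split_ifs <;> first | contradiction | (exfalso; omega) | (norm_num; done)
    · have ht : Dtau 1 (-1) = 2 := by decide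
      rw [ht]; funext t
      simp only [Pi.sub_apply, Pi.add_apply, Pi.smul_apply, smul_eq_mul]
      unfold Ez Dalpha De; norm_num
      split_ifs <;> first | contradiction | (exfalso; omega) | (norm_num; done)
    · have ht : Dtau 1 2 = -1 := by decide
      rw [ht]; funext t
      simp only [Pi.sub_apply, Pi.add_apply, Pi.smul_apply, smul_eq_mul]
      unfold Ez Dalpha De; norm_num
      split_ifs <;> first | contradiction | (exfalso; omega) | (norm_num; done)
    · have ht : Dtau 1 (-2) = 1 := by decide
      rw [ht]; funext t
      simp only [Pi.sub_apply, Pi.add_apply, Pi.smul_apply, smul_eq_mul]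
      unfold Ez Dalpha De; norm_num
      split_ifs <;> first | contradiction | (exfalso; omega) | (norm_num; done)
    · have ht : Dtau 1 z = z := by
        simp only [Dtau, if_pos rfl]; split_ifs <;> omega
      have ha : Dalpha 1 z.natAbs = 0 := by
        unfold Dalpha De; norm_num
        split_ifs <;> first | contradiction | (exfalso; omega) | (norm_num; done)
      rw [ht, ha, mul_zero, zero_smul, sub_zero]
  · have h2j : 2 ≤ j := by omega
    have hz5 : z = (j : ℤ) ∨ z = -(j : ℤ) ∨ z = (j : ℤ) - 1 ∨ z = -((j : ℤ) - 1)
        ∨ (z.natAbs ≠ j ∧ z.natAbs ≠ j - 1) := by omega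
    rcases hz5 with rfl | rfl | rfl | rfl | ⟨hb1, hb2⟩
    · have ht : Dtau j (j : ℤ) = (j : ℤ) - 1 := by
        simp only [Dtau, if_neg hne]; split_ifs <;> omega
      have hz : ((j : ℤ)).natAbs = j := by omega
      rw [ht, hz]; funext t
      simp only [Pi.sub_apply, Pi.smul_apply, smul_eq_mul]
      unfold Ez Dalpha De
      simp only [if_neg hne, Pi.sub_apply, Pi.add_apply]
      split_ifs <;> first | contradiction | (exfalso; omega) | (norm_num; done)
    · have ht : Dtau j (-(j : ℤ)) = -((j : ℤ) - 1) := by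
        simp only [Dtau, if_neg hne]; split_ifs <;> omega
      have hz : (-(j : ℤ)).natAbs = j := by omega
      rw [ht, hz]; funext t
      simp only [Pi.sub_apply, Pi.smul_apply, smul_eq_mul]
      unfold Ez Dalpha De
      simp only [if_neg hne, Pi.sub_apply, Pi.add_apply]
      split_ifs <;> first | contradiction | (exfalso; omega) | (norm_num; done)
    · have ht : Dtau j ((j : ℤ) - 1) = (j : ℤ) := by
        simp only [Dtau, if_neg hne]; split_ifs <;> omega
      have hz : ((j : ℤ) - 1).natAbs = j - 1 := by omega
      rw [ht, hz]; funext t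
      simp only [Pi.sub_apply, Pi.smul_apply, smul_eq_mul]
      unfold Ez Dalpha De
      simp only [if_neg hne, Pi.sub_apply, Pi.add_apply]
      split_ifs <;> first | contradiction | (exfalso; omega) | (norm_num; done)
    · have ht : Dtau j (-((j : ℤ) - 1)) = -(j : ℤ) := by
        simp only [Dtau, if_neg hne]; split_ifs <;> omega
      have hz : (-((j : ℤ) - 1)).natAbs = j - 1 := by omega
      rw [ht, hz]; funext t
      simp only [Pi.sub_apply, Pi.smul_apply, smul_eq_mul]
      unfold Ez Dalpha De
      simp only [if_neg hne, Pi.sub_apply, Pi.add_apply]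
      split_ifs <;> first | contradiction | (exfalso; omega) | (norm_num; done)
    · have ht : Dtau j z = z := by
        simp only [Dtau, if_neg hne]; split_ifs <;> omega
      have ha : Dalpha j z.natAbs = 0 := by
        unfold Dalpha De
        simp only [if_neg hne, Pi.sub_apply, Pi.add_apply]
        split_ifs <;> first | contradiction | (exfalso; omega) | (norm_num; done)
      rw [ht, ha, mul_zero, zero_smul, sub_zero]

lemma Ez_inj (z z' : ℤ) (h1 : 1 ≤ z.natAbs) (h1' : 1 ≤ z'.natAbs) (h : Ez z = Ez z') :
    z = z' := by
  have h2 := congrFun h z.natAbs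
  have h3 := congrFun h z'.natAbs
  simp only [Ez] at h2 h3
  split_ifs at h2 h3 <;>
    first
      | omega
      | (exfalso; revert h2; norm_num)
      | (exfalso; revert h3; norm_num)

/-- The window (signed permutation) associated to a word. -/
def Dwin (w : List ℕ) : Function.End ℤ := (w.map Dtau).prod

lemma Dwin_nil : Dwin [] = 1 := rfl

lemma Dwin_concat (w : List ℕ) (j : ℕ) : Dwin (w ++ [j]) = Dwin w * Dtau j := by
  simp [Dwin]

lemma Dwin_cons (w : List ℕ) (j : ℕ) : Dwin (j :: w) = Dtau j * Dwin w := by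
  simp [Dwin]

lemma Dwin_odd (w : List ℕ) (hw : ∀ j ∈ w, 1 ≤ j) (z : ℤ) : Dwin w (-z) = -(Dwin w z) := by
  induction w generalizing z with
  | nil => rfl
  | cons j w ih =>
      have h1 : Dwin (j :: w) (-z) = Dtau j (Dwin w (-z)) := by rw [Dwin_cons]; rfl
      have h2 : Dwin (j :: w) z = Dtau j (Dwin w z) := by rw [Dwin_cons]; rfl
      rw [h1, h2, ih (fun x hx => hw x (List.mem_cons_of_mem _ hx)) z,
        Dtau_odd j (hw j List.mem_cons_self)]

/-- `σ` is the window of the orthogonal map `M`. -/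
def IsWin (n : ℕ) (M : Function.End (ℕ → ℝ)) (σ : Function.End ℤ) : Prop :=
  ∀ z : ℤ, 1 ≤ z.natAbs → z.natAbs ≤ n + 1 →
    M (Ez z) = Ez (σ z) ∧ 1 ≤ (σ z).natAbs ∧ (σ z).natAbs ≤ n + 1

lemma isWin_one (n : ℕ) : IsWin n 1 1 := by
  intro z h1 h2
  exact ⟨rfl, h1, h2⟩

lemma isWin_mul (n j : ℕ) (hn : 1 ≤ n) (hj : 1 ≤ j) (hj2 : j ≤ n + 1)
    (M : Function.End (ℕ → ℝ)) (σ : Function.End ℤ) (h : IsWin n M σ) :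
    IsWin n (M * Ds n j) (σ * Dtau j) := by
  intro z h1 h2
  obtain ⟨ha1, ha2⟩ := Dtau_abs hn hj hj2 z h1 h2
  obtain ⟨hb1, hb2, hb3⟩ := h (Dtau j z) ha1 ha2
  refine ⟨?_, hb2, hb3⟩
  show M (Ds n j (Ez z)) = _
  rw [Ds_Ez n j hj hj2 z h1 h2, hb1]
  rfl

/-- The contribution of an (ordered) pair of positions to the length statistic. -/
def Dpair (σ : Function.End ℤ) (p : ℕ × ℕ) : ℕ :=
  (if p.1 < p.2 ∧ σ (p.2 : ℤ) < σ (p.1 : ℤ) then 1 else 0) +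
  (if p.1 < p.2 ∧ σ (p.1 : ℤ) + σ (p.2 : ℤ) < 0 then 1 else 0)

/-- The length statistic (inversions + negative sum pairs) of a window. -/
def Dphi (n : ℕ) (σ : Function.End ℤ) : ℕ :=
  ∑ p ∈ Finset.Icc 1 (n + 1) ×ˢ Finset.Icc 1 (n + 1), Dpair σ p

lemma Dphi_one (n : ℕ) : Dphi n 1 = 0 := by
  apply Finset.sum_eq_zero
  intro p hp
  simp only [Finset.mem_product, Finset.mem_Icc] at hp
  have h1 : (1 : Function.End ℤ) (p.1 : ℤ) = (p.1 : ℤ) := rfl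
  have h2 : (1 : Function.End ℤ) (p.2 : ℤ) = (p.2 : ℤ) := rfl
  simp only [Dpair, h1, h2]
  split_ifs <;> omega

lemma Dphi_aux (n k : ℕ) (hk : 1 ≤ k) (hk2 : k + 1 ≤ n + 1) (σ σ' : Function.End ℤ)
    (P1 : ∀ p : ℕ × ℕ, p ∈ Finset.Icc 1 (n + 1) ×ˢ Finset.Icc 1 (n + 1) →
      p ≠ (k, k + 1) → p ≠ (k + 1, k) →
      Dpair σ' (Equiv.swap k (k + 1) p.1, Equiv.swap k (k + 1) p.2) = Dpair σ p)
    (P2 : Dpair σ' (k + 1, k) + Dpair σ' (k, k + 1) ≤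
      Dpair σ (k, k + 1) + Dpair σ (k + 1, k) + 1) :
    Dphi n σ' ≤ Dphi n σ + 1 := by
  classical
  set S := Finset.Icc 1 (n + 1) ×ˢ Finset.Icc 1 (n + 1) with hS
  have hmem1 : ((k, k + 1) : ℕ × ℕ) ∈ S := by
    simp only [hS, Finset.mem_product, Finset.mem_Icc]; omega
  have hmem2 : ((k + 1, k) : ℕ × ℕ) ∈ S := by
    simp only [hS, Finset.mem_product, Finset.mem_Icc]; omega
  have hre : Dphi n σ' = ∑ p ∈ S,
      Dpair σ' (Equiv.swap k (k + 1) p.1, Equiv.swap k (k + 1) p.2) := by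
    rw [Dphi]
    refine Finset.sum_nbij'
      (i := fun p => (Equiv.swap k (k + 1) p.1, Equiv.swap k (k + 1) p.2))
      (j := fun p => (Equiv.swap k (k + 1) p.1, Equiv.swap k (k + 1) p.2))
      ?_ ?_ ?_ ?_ ?_
    · intro a ha
      simp only [hS, Finset.mem_product, Finset.mem_Icc] at ha ⊢
      constructor <;>
      · rw [Equiv.swap_apply_def]; split_ifs <;> omega
    · intro a ha
      simp only [hS, Finset.mem_product, Finset.mem_Icc] at ha ⊢
      constructor <;>
      · rw [Equiv.swap_apply_def]; split_ifs <;> omega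
    · intro a _; simp [Equiv.swap_apply_self]
    · intro a _; simp [Equiv.swap_apply_self]
    · intro a _; simp [Equiv.swap_apply_self]
  rw [hre, Dphi]
  have hmem2' : ((k + 1, k) : ℕ × ℕ) ∈ S.erase (k, k + 1) := by
    rw [Finset.mem_erase]
    refine ⟨fun hc => ?_, hmem2⟩
    have := Prod.mk.injEq (k+1) k k (k+1) ▸ congrArg id hc
    rw [Prod.mk.injEq] at hc
    omega
  rw [← Finset.sum_erase_add S _ hmem1, ← Finset.sum_erase_add (S.erase (k, k + 1)) _ hmem2']
  rw [← Finset.sum_erase_add S (Dpair σ) hmem1,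
    ← Finset.sum_erase_add (S.erase (k, k + 1)) (Dpair σ) hmem2']
  have hcong : ∑ p ∈ (S.erase (k, k + 1)).erase (k + 1, k),
      Dpair σ' (Equiv.swap k (k + 1) p.1, Equiv.swap k (k + 1) p.2)
      = ∑ p ∈ (S.erase (k, k + 1)).erase (k + 1, k), Dpair σ p := by
    apply Finset.sum_congr rfl
    intro p hp
    rw [Finset.mem_erase, Finset.mem_erase] at hp
    exact P1 p hp.2.2 hp.2.1 hp.1
  rw [hcong]
  have e1 : Equiv.swap k (k + 1) k = k + 1 := Equiv.swap_apply_left _ _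
  have e2 : Equiv.swap k (k + 1) (k + 1) = k := Equiv.swap_apply_right _ _
  have ev1 : Dpair σ' (Equiv.swap k (k + 1) ((k+1, k) : ℕ × ℕ).1,
      Equiv.swap k (k + 1) ((k+1, k) : ℕ × ℕ).2) = Dpair σ' (k, k + 1) := by
    simp only [e1, e2]
  have ev2 : Dpair σ' (Equiv.swap k (k + 1) ((k, k+1) : ℕ × ℕ).1,
      Equiv.swap k (k + 1) ((k, k+1) : ℕ × ℕ).2) = Dpair σ' (k + 1, k) := by
    simp only [e1, e2]
  rw [ev1, ev2]
  omega

lemma Dphi_step (n j : ℕ) (hn : 1 ≤ n) (hj : 1 ≤ j) (hj2 : j ≤ n + 1)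
    (σ : Function.End ℤ) (hodd : ∀ z, σ (-z) = -σ z) :
    Dphi n (σ * Dtau j) ≤ Dphi n σ + 1 := by
  rcases eq_or_ne j 1 with rfl | hne
  · -- j = 1 : positions 1 and 2, with sign twist
    have hv : ∀ m : ℕ, (σ * Dtau 1) ((Equiv.swap 1 2 m : ℕ) : ℤ)
        = if m = 1 ∨ m = 2 then -σ (m : ℤ) else σ (m : ℤ) := by
      intro m
      show σ (Dtau 1 ((Equiv.swap 1 2 m : ℕ) : ℤ)) = _
      rcases eq_or_ne m 1 with rfl | hm1
      · rw [Equiv.swap_apply_left]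
        have h : Dtau 1 (((2 : ℕ) : ℤ)) = -(1 : ℤ) := by rw [Dtau_one]; norm_num
        rw [h, show (-(1:ℤ)) = -((1:ℕ):ℤ) by norm_num, hodd]
        simp
      rcases eq_or_ne m 2 with rfl | hm2
      · rw [Equiv.swap_apply_right]
        have h : Dtau 1 (((1 : ℕ) : ℤ)) = -(2 : ℤ) := by rw [Dtau_one]; norm_num
        rw [h, show (-(2:ℤ)) = -((2:ℕ):ℤ) by norm_num, hodd]
        simp
      · rw [Equiv.swap_apply_of_ne_of_ne hm1 hm2]
        have h : Dtau 1 ((m : ℕ) : ℤ) = (m : ℤ) := by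
          rw [Dtau_one, if_neg (by omega), if_neg (by omega), if_neg (by omega),
            if_neg (by omega)]
        rw [h, if_neg (by omega)]
    apply Dphi_aux n 1 le_rfl (by omega)
    · rintro ⟨i, i'⟩ hp hne1 hne2
      simp only [Finset.mem_product, Finset.mem_Icc] at hp
      have hne1' : ¬(i = 1 ∧ i' = 2) := by
        rintro ⟨rfl, rfl⟩; exact hne1 rfl
      have hne2' : ¬(i = 2 ∧ i' = 1) := by
        rintro ⟨rfl, rfl⟩; exact hne2 rfl
      simp only [Dpair, hv]
      simp only [Equiv.swap_apply_def]
      split_ifs <;> omega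
    · have h1 := hv 1
      rw [Equiv.swap_apply_left] at h1
      rw [if_pos (Or.inl rfl)] at h1
      have h2 := hv 2
      rw [Equiv.swap_apply_right] at h2
      rw [if_pos (Or.inr rfl)] at h2
      simp only [Dpair]
      have e12 : ((1 : ℕ) + 1 : ℕ) = 2 := rfl
      rw [e12, h1, h2]
      split_ifs <;> omega
  · -- j ≥ 2 : positions j-1 and j
    have h2j : 2 ≤ j := by omega
    have hkk : j - 1 + 1 = j := by omega
    have hv : ∀ m : ℕ, (σ * Dtau j) ((Equiv.swap (j - 1) j m : ℕ) : ℤ) = σ (m : ℤ) := by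
      intro m
      show σ (Dtau j ((Equiv.swap (j - 1) j m : ℕ) : ℤ)) = _
      congr 1
      rw [Equiv.swap_apply_def, Dtau_ge2 h2j]
      split_ifs <;> omega
    have haux := Dphi_aux n (j - 1) (by omega) (by omega) σ (σ * Dtau j)
    rw [hkk] at haux
    apply haux
    · rintro ⟨i, i'⟩ hp hne1 hne2
      simp only [Finset.mem_product, Finset.mem_Icc] at hp
      have hne1' : ¬(i = j - 1 ∧ i' = j) := by
        rintro ⟨rfl, rfl⟩; exact hne1 rfl
      have hne2' : ¬(i = j ∧ i' = j - 1) := by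
        rintro ⟨rfl, rfl⟩; exact hne2 rfl
      simp only [Dpair, hv]
      simp only [Equiv.swap_apply_def]
      split_ifs <;> omega
    · have h1 := hv (j - 1)
      rw [Equiv.swap_apply_left] at h1
      have h2 := hv j
      rw [Equiv.swap_apply_right] at h2
      simp only [Dpair]
      rw [h1, h2]
      split_ifs <;> omega

lemma Dkey (n : ℕ) (hn : 1 ≤ n) : ∀ w : List ℕ, (∀ j ∈ w, 1 ≤ j ∧ j ≤ n + 1) →
    IsWin n ((w.map (Ds n)).prod) (Dwin w) ∧ Dphi n (Dwin w) ≤ w.length := by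
  intro w
  induction w using List.reverseRecOn with
  | nil =>
      intro _
      exact ⟨isWin_one n, by rw [Dwin_nil, Dphi_one]; exact Nat.zero_le _⟩
  | append_singleton w j ih =>
      intro hw
      have hj : 1 ≤ j ∧ j ≤ n + 1 := hw j (by simp)
      have hw' : ∀ x ∈ w, 1 ≤ x ∧ x ≤ n + 1 := fun x hx => hw x (by simp [hx])
      obtain ⟨ih1, ih2⟩ := ih hw'
      have hprod : ((w ++ [j]).map (Ds n)).prod = (w.map (Ds n)).prod * Ds n j := by
        simp
      have hodd : ∀ z, Dwin w (-z) = -(Dwin w z) :=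
        Dwin_odd w (fun x hx => (hw' x hx).1)
      rw [hprod, Dwin_concat]
      refine ⟨isWin_mul n j hn hj.1 hj.2 _ _ ih1, ?_⟩
      calc Dphi n (Dwin w * Dtau j) ≤ Dphi n (Dwin w) + 1 :=
            Dphi_step n j hn hj.1 hj.2 _ hodd
        _ ≤ w.length + 1 := by omega
        _ = (w ++ [j]).length := by simp

/-! ### Computing the window of `Dword` -/

def wA (k : ℕ) : List ℕ := ((List.range k).map (· + 1)).reverse
def wB (m : ℕ) : List ℕ := (List.range m).map (· + 3)

lemma wA_succ (k : ℕ) : wA (k + 1) = (k + 1) :: wA k := by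
  simp [wA, List.range_succ]

lemma wB_succ (m : ℕ) : wB (m + 1) = wB m ++ [m + 3] := by
  simp [wB, List.range_succ]

lemma A_spec : ∀ k : ℕ, 2 ≤ k → ∀ z : ℤ, 1 ≤ z →
    Dwin (wA k) z = if z = 1 then -1 else if z = 2 then -(k : ℤ)
      else if z ≤ (k : ℤ) then z - 1 else z := by
  intro k
  induction k with
  | zero => omega
  | succ k ih =>
      intro hk z hz
      rcases eq_or_ne k 1 with rfl | hk1
      · -- base : k + 1 = 2, wA 2 = [2, 1]
        have h2 : Dwin (wA 2) z = Dtau 2 (Dtau 1 z) := rfl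
        rw [h2]
        rcases eq_or_ne z 1 with rfl | e1
        · rw [show Dtau 1 (1 : ℤ) = -2 from by rw [Dtau_one]; norm_num,
            show Dtau 2 (-2 : ℤ) = -1 from by rw [Dtau_ge2 (by omega)]; norm_num]
          norm_num
        rcases eq_or_ne z 2 with rfl | e2
        · rw [show Dtau 1 (2 : ℤ) = -1 from by rw [Dtau_one]; norm_num,
            show Dtau 2 (-1 : ℤ) = -2 from by rw [Dtau_ge2 (by omega)]; norm_num]
          norm_num
        · rw [show Dtau 1 z = z from by
            rw [Dtau_one, if_neg (by omega), if_neg (by omega), if_neg (by omega),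
              if_neg (by omega)],
            show Dtau 2 z = z from by
            rw [Dtau_ge2 (by omega), if_neg (by push_cast; omega), if_neg (by push_cast; omega),
              if_neg (by push_cast; omega), if_neg (by push_cast; omega)]]
          split_ifs <;> push_cast at * <;> omega
      · have hk2 : 2 ≤ k := by omega
        have hstep : Dwin (wA (k + 1)) z = Dtau (k + 1) (Dwin (wA k) z) := by
          rw [wA_succ]; rfl
        rw [hstep, ih hk2 z hz, Dtau_ge2 (by omega)]
        split_ifs <;> push_cast at * <;> omega

lemma B_spec : ∀ m : ℕ, ∀ z : ℤ, 1 ≤ z →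
    Dwin (wB m) z = if z = 1 then 1 else if z = (m : ℤ) + 2 then 2
      else if z ≤ (m : ℤ) + 2 then z + 1 else z := by
  intro m
  induction m with
  | zero =>
      intro z hz
      have h : Dwin (wB 0) z = z := rfl
      rw [h]; split_ifs <;> omega
  | succ m ih =>
      intro z hz
      have hstep : Dwin (wB (m + 1)) z = Dwin (wB m) (Dtau (m + 3) z) := by
        rw [wB_succ, Dwin_concat]; rfl
      have htv : Dtau (m + 3) z = if z = (m : ℤ) + 3 then (m : ℤ) + 2
          else if z = (m : ℤ) + 2 then (m : ℤ) + 3 else z := by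
        rw [Dtau_ge2 (by omega)]
        split_ifs <;> push_cast at * <;> omega
      by_cases d1 : z = (m : ℤ) + 3
      · rw [hstep, show Dtau (m + 3) z = (m : ℤ) + 2 from by rw [htv, if_pos d1],
          ih ((m : ℤ) + 2) (by omega)]
        split_ifs <;> push_cast at * <;> omega
      · by_cases d2 : z = (m : ℤ) + 2
        · rw [hstep, show Dtau (m + 3) z = (m : ℤ) + 3 from by rw [htv, if_neg d1, if_pos d2],
            ih ((m : ℤ) + 3) (by omega)]
          split_ifs <;> push_cast at * <;> omega
        · rw [hstep, show Dtau (m + 3) z = z from by rw [htv, if_neg d1, if_neg d2], ih z hz]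
          split_ifs <;> push_cast at * <;> omega

lemma Dword_eq (n : ℕ) : Dword n = wA (n + 1) ++ wB (n - 1) := rfl

lemma Dword_win (n : ℕ) (hn : 3 ≤ n) (i : ℕ) (h1 : 1 ≤ i) (h2 : i ≤ n + 1) :
    Dwin (Dword n) ((i : ℕ) : ℤ) =
      if i = 1 then -1 else if i = n + 1 then -((n : ℤ) + 1) else (i : ℤ) := by
  have happ : Dwin (Dword n) ((i : ℕ) : ℤ)
      = Dwin (wA (n + 1)) (Dwin (wB (n - 1)) ((i : ℕ) : ℤ)) := by
    rw [Dword_eq, Dwin]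
    rw [List.map_append, List.prod_append]
    rfl
  rw [happ, B_spec (n - 1) _ (by omega)]
  rcases eq_or_ne i 1 with rfl | hi1
  · rw [if_pos (by norm_num)]
    rw [A_spec (n + 1) (by omega) 1 (by omega)]
    norm_num
  rcases eq_or_ne i (n + 1) with rfl | hin
  · rw [if_neg (by push_cast; omega), if_pos (by push_cast; omega)]
    rw [A_spec (n + 1) (by omega) 2 (by omega)]
    rw [if_pos rfl, if_neg (by omega), if_neg (by omega)]
    push_cast; omega
  · rw [if_neg (by push_cast; omega), if_neg (by push_cast; omega),
      if_pos (by push_cast; omega)]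
    rw [A_spec (n + 1) (by omega) _ (by omega)]
    rw [if_neg (by omega), if_neg (by omega), if_pos (by push_cast; omega)]
    omega

lemma Dphi_congr (n : ℕ) (σ σ' : Function.End ℤ)
    (h : ∀ i : ℕ, 1 ≤ i → i ≤ n + 1 → σ ((i : ℕ) : ℤ) = σ' ((i : ℕ) : ℤ)) :
    Dphi n σ = Dphi n σ' := by
  apply Finset.sum_congr rfl
  intro p hp
  simp only [Finset.mem_product, Finset.mem_Icc] at hp
  simp only [Dpair, h p.1 hp.1.1 hp.1.2, h p.2 hp.2.1 hp.2.2]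

lemma Dphi_lower (n : ℕ) (hn : 3 ≤ n) (σ : Function.End ℤ)
    (hσ : ∀ i : ℕ, 1 ≤ i → i ≤ n + 1 → σ ((i : ℕ) : ℤ) =
      if i = 1 then -1 else if i = n + 1 then -((n : ℤ) + 1) else (i : ℤ)) :
    2 * n ≤ Dphi n σ := by
  have hsub : (Finset.Icc 1 n) ×ˢ ({n + 1} : Finset ℕ)
      ⊆ Finset.Icc 1 (n + 1) ×ˢ Finset.Icc 1 (n + 1) := by
    intro p hp
    simp only [Finset.mem_product, Finset.mem_Icc, Finset.mem_singleton] at *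
    omega
  have h1 : ∑ p ∈ (Finset.Icc 1 n) ×ˢ ({n + 1} : Finset ℕ), Dpair σ p ≤ Dphi n σ :=
    Finset.sum_le_sum_of_subset hsub
  have h2 : ∀ p ∈ (Finset.Icc 1 n) ×ˢ ({n + 1} : Finset ℕ), Dpair σ p = 2 := by
    intro p hp
    simp only [Finset.mem_product, Finset.mem_Icc, Finset.mem_singleton] at hp
    obtain ⟨⟨ha, hb⟩, hc⟩ := hp
    simp only [Dpair]
    rw [hσ p.1 (by omega) (by omega), hσ p.2 (by omega) (by omega)]
    split_ifs <;> omega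
  rw [Finset.sum_congr rfl h2] at h1
  rw [Finset.sum_const, Finset.card_product, Nat.card_Icc, Finset.card_singleton] at h1
  simp only [smul_eq_mul] at h1
  omega

/-- The expression `w_n = (s_{n+1} s_n ⋯ s_2 s_1)(s_3 s_4 ⋯ s_n s_{n+1})` in
the Weyl group of type `D_{n+1}` is reduced: the word has length `2n` and no
product of fewer than `2n` simple reflections equals `w_n`. -/
theorem Dword_reduced (n : ℕ) (hn : 3 ≤ n) :
    (Dword n).length = 2 * n ∧
    ∀ l : List ℕ, (∀ j ∈ l, 1 ≤ j ∧ j ≤ n + 1) →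
      (l.map (Ds n)).prod = ((Dword n).map (Ds n)).prod →
      2 * n ≤ l.length := by
  have hlen : (Dword n).length = 2 * n := by
    have h : (Dword n).length = (n + 1) + (n - 1) := by simp [Dword]
    omega
  refine ⟨hlen, ?_⟩
  intro l hl hprod
  have hn1 : 1 ≤ n := by omega
  have hDent : ∀ j ∈ Dword n, 1 ≤ j ∧ j ≤ n + 1 := by
    intro j hj
    simp only [Dword, List.mem_append, List.mem_reverse, List.mem_map, List.mem_range] at hj
    rcases hj with ⟨a, ha, rfl⟩ | ⟨a, ha, rfl⟩ <;> omega
  obtain ⟨hwl, hphil⟩ := Dkey n hn1 l hl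
  obtain ⟨hwd, _⟩ := Dkey n hn1 (Dword n) hDent
  have hagree : ∀ i : ℕ, 1 ≤ i → i ≤ n + 1 →
      Dwin l ((i : ℕ) : ℤ) = Dwin (Dword n) ((i : ℕ) : ℤ) := by
    intro i hi1 hi2
    obtain ⟨e1, b1, b2⟩ := hwl ((i : ℕ) : ℤ) (by omega) (by omega)
    obtain ⟨e2, c1, c2⟩ := hwd ((i : ℕ) : ℤ) (by omega) (by omega)
    rw [hprod] at e1
    exact Ez_inj _ _ b1 c1 (e1.symm.trans e2)
  have heq : Dphi n (Dwin l) = Dphi n (Dwin (Dword n)) := Dphi_congr n _ _ hagree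
  have hlow : 2 * n ≤ Dphi n (Dwin (Dword n)) :=
    Dphi_lower n hn _ (fun i h1 h2 => Dword_win n hn i h1 h2)
  omega
end

section
/- Let W(Â_m) be the affine Weyl group of type Â_m with generators s_0, s_1, ..., s_m acting on Q(A_m) ⊕ Z, where α_0 = e_m - e_1 + 1 and α_i = e_i - e_{i+1}. The element ĉ_m = (s_1 ⋯ s_m)(s_0 s_1 ⋯ s_{m-1}) has length 2m; i.e., the given expression is reduced. -/
/-- Standard basis vectors (position `0` is the affine `ℤ`-coordinate,
positions `1,…,m+1` carry the type `A_m` root system). -/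
noncomputable def Ae (a : ℕ) : ℕ → ℝ := fun t => if t = a then 1 else 0

/-- The simple roots of type `Â_m`: `α_0 = e_m - e_1 + δ` (where `δ = Ae 0`
is the isotropic affine generator) and `α_j = e_j - e_{j+1}` for
`1 ≤ j ≤ m`. -/
noncomputable def Aalpha (m j : ℕ) : ℕ → ℝ :=
  if j = 0 then Ae m - Ae 1 + Ae 0 else Ae j - Ae (j + 1)

/-- The affine simple reflection `s_j`, the reflection in `α_j` with respect
to the bilinear form extending the standard inner product on the span of
`e_1,…,e_{m+1}` with `δ` isotropic and orthogonal to it. -/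
noncomputable def As (m j : ℕ) : Function.End (ℕ → ℝ) := fun v =>
  v - (∑ i ∈ Finset.Icc 1 (m + 1), v i * Aalpha m j i) • Aalpha m j

/-- The word `(s_1 ⋯ s_m)(s_0 s_1 ⋯ s_{m-1})` for `ĉ_m ∈ W(Â_m)`. -/
def Aword (m : ℕ) : List ℕ :=
  (List.range m).map (· + 1) ++ List.range m

namespace AuxAW

abbrev St := (ℕ → ℕ) × (ℕ → ℤ)

def stepP (m j : ℕ) (s : St) : St :=
  if j = 0 then
    (fun i => if s.1 i = 1 then m else if s.1 i = m then 1 else s.1 i,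
     fun i => if s.1 i = 1 then s.2 i + 1 else if s.1 i = m then s.2 i - 1 else s.2 i)
  else
    (fun i => if s.1 i = j then j + 1 else if s.1 i = j + 1 then j else s.1 i, s.2)

def Sst (m : ℕ) (l : List ℕ) : St := l.foldr (stepP m) (id, fun _ => 0)

lemma Sst_nil (m : ℕ) : Sst m [] = (id, fun _ => 0) := rfl

lemma Sst_cons (m a : ℕ) (l : List ℕ) : Sst m (a :: l) = stepP m a (Sst m l) := rfl

/-- coefficient extraction -/
lemma coef_eq (m j t : ℕ) (h1 : 1 ≤ t) (h2 : t ≤ m + 1) :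
    (∑ i ∈ Finset.Icc 1 (m + 1), Ae t i * Aalpha m j i) = Aalpha m j t := by
  rw [Finset.sum_eq_single t]
  · simp [Ae]
  · intro b _ hb
    have : Ae t b = 0 := by simp [Ae, hb]
    rw [this, zero_mul]
  · intro h
    exact absurd (Finset.mem_Icc.mpr ⟨h1, h2⟩) h

lemma As_AeZero (m j : ℕ) : As m j (Ae 0) = Ae 0 := by
  unfold As
  have h : (∑ i ∈ Finset.Icc 1 (m + 1), Ae 0 i * Aalpha m j i) = 0 := by
    apply Finset.sum_eq_zero
    intro i hi
    have hi' : 1 ≤ i := (Finset.mem_Icc.mp hi).1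
    have : Ae 0 i = 0 := by
      simp only [Ae, if_neg (by omega : ¬ i = 0)]
    rw [this, zero_mul]
  rw [h, zero_smul, sub_zero]

lemma As_add_smul (m j : ℕ) (u v : ℕ → ℝ) (c : ℝ) :
    As m j (u + c • v) = As m j u + c • As m j v := by
  unfold As
  have h : (∑ i ∈ Finset.Icc 1 (m + 1), (u + c • v) i * Aalpha m j i)
      = (∑ i ∈ Finset.Icc 1 (m + 1), u i * Aalpha m j i)
        + c * (∑ i ∈ Finset.Icc 1 (m + 1), v i * Aalpha m j i) := by
    rw [Finset.mul_sum, ← Finset.sum_add_distrib]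
    refine Finset.sum_congr rfl fun i _ => ?_
    simp only [Pi.add_apply, Pi.smul_apply, smul_eq_mul]
    ring
  rw [h]
  funext t
  simp only [Pi.sub_apply, Pi.add_apply, Pi.smul_apply, smul_eq_mul]
  ring

lemma As_col_swap1 (m j : ℕ) (h1 : 1 ≤ j) (hj : j ≤ m) : As m j (Ae j) = Ae (j + 1) := by
  unfold As
  rw [coef_eq m j j h1 (by omega)]
  have hj0 : ¬ j = 0 := by omega
  have hval : Aalpha m j j = 1 := by
    simp [Aalpha, hj0, Ae, Pi.sub_apply, if_neg (by omega : ¬ j = j + 1)]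
  rw [hval]
  funext t
  simp only [Pi.sub_apply, Pi.smul_apply, smul_eq_mul, one_mul, Aalpha, if_neg hj0,
    Pi.add_apply]
  ring

lemma As_col_swap2 (m j : ℕ) (h1 : 1 ≤ j) (hj : j ≤ m) : As m j (Ae (j + 1)) = Ae j := by
  unfold As
  rw [coef_eq m j (j + 1) (by omega) (by omega)]
  have hj0 : ¬ j = 0 := by omega
  have hval : Aalpha m j (j + 1) = -1 := by
    simp [Aalpha, hj0, Ae, Pi.sub_apply, if_neg (by omega : ¬ j + 1 = j)]
  rw [hval]
  funext t
  simp only [Pi.sub_apply, Pi.smul_apply, smul_eq_mul, neg_one_mul, Aalpha, if_neg hj0,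
    Pi.add_apply]
  ring

lemma As_col_fix (m j t : ℕ) (h1 : 1 ≤ j) (hj : j ≤ m) (ht1 : 1 ≤ t) (ht2 : t ≤ m + 1)
    (h3 : t ≠ j) (h4 : t ≠ j + 1) : As m j (Ae t) = Ae t := by
  unfold As
  rw [coef_eq m j t ht1 ht2]
  have hj0 : ¬ j = 0 := by omega
  have hval : Aalpha m j t = 0 := by
    simp [Aalpha, hj0, Ae, Pi.sub_apply, if_neg h3, if_neg h4]
  rw [hval, zero_smul, sub_zero]

lemma As0_col1 (m : ℕ) (hm : 1 < m) : As m 0 (Ae 1) = Ae m + Ae 0 := by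
  unfold As
  rw [coef_eq m 0 1 le_rfl (by omega)]
  have hval : Aalpha m 0 1 = -1 := by
    simp [Aalpha, Ae, Pi.sub_apply, Pi.add_apply, if_neg (by omega : ¬ (1:ℕ) = m),
      if_neg (by omega : ¬ (1:ℕ) = 0)]
  rw [hval, show Aalpha m 0 = Ae m - Ae 1 + Ae 0 from by simp [Aalpha]]
  funext t
  simp only [Pi.sub_apply, Pi.smul_apply, smul_eq_mul, neg_one_mul, Pi.add_apply]
  ring

lemma As0_colm (m : ℕ) (hm : 1 < m) : As m 0 (Ae m) = Ae 1 - Ae 0 := by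
  unfold As
  rw [coef_eq m 0 m (by omega) (by omega)]
  have hval : Aalpha m 0 m = 1 := by
    simp [Aalpha, Ae, Pi.sub_apply, Pi.add_apply, if_neg (by omega : ¬ m = 1),
      if_neg (by omega : ¬ m = 0)]
  rw [hval, show Aalpha m 0 = Ae m - Ae 1 + Ae 0 from by simp [Aalpha]]
  funext t
  simp only [Pi.sub_apply, Pi.smul_apply, smul_eq_mul, one_mul, Pi.add_apply]
  ring

lemma As0_fix (m t : ℕ) (hm : 1 < m) (ht1 : 1 ≤ t) (ht2 : t ≤ m + 1)
    (h3 : t ≠ 1) (h4 : t ≠ m) : As m 0 (Ae t) = Ae t := by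
  unfold As
  rw [coef_eq m 0 t ht1 ht2]
  have hval : Aalpha m 0 t = 0 := by
    simp [Aalpha, Ae, Pi.sub_apply, Pi.add_apply, if_neg h4, if_neg h3,
      if_neg (by omega : ¬ t = 0)]
  rw [hval, zero_smul, sub_zero]

end AuxAW

namespace AuxAW

lemma Sst_mem (m : ℕ) (hm : 1 < m) (l : List ℕ) (hl : ∀ j ∈ l, j ≤ m) :
    (∀ i, 1 ≤ i → i ≤ m + 1 → 1 ≤ (Sst m l).1 i ∧ (Sst m l).1 i ≤ m + 1)
    ∧ (∀ x y, (Sst m l).1 x = (Sst m l).1 y → x = y) := by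
  induction l with
  | nil => exact ⟨fun i h1 h2 => ⟨h1, h2⟩, fun x y h => h⟩
  | cons a t ih =>
    obtain ⟨h1, h2⟩ := ih (fun j hj => hl j (List.mem_cons_of_mem a hj))
    have ha : a ≤ m := hl a List.mem_cons_self
    rw [Sst_cons]
    constructor
    · intro i hi1 hi2
      obtain ⟨g1, g2⟩ := h1 i hi1 hi2
      by_cases h0 : a = 0 <;> simp only [stepP, h0, if_pos, if_neg, reduceIte] <;>
        split_ifs <;> omega
    · intro x y hxy
      apply h2
      by_cases h0 : a = 0 <;> simp only [stepP, h0, reduceIte] at hxy <;>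
        split_ifs at hxy <;> omega

lemma cols (m : ℕ) (hm : 1 < m) (l : List ℕ) (hl : ∀ j ∈ l, j ≤ m) :
    ∀ i, 1 ≤ i → i ≤ m + 1 →
      ((l.map (As m)).prod) (Ae i)
        = Ae ((Sst m l).1 i) + ((Sst m l).2 i : ℝ) • Ae 0 := by
  induction l with
  | nil =>
    intro i _ _
    show Ae i = Ae i + ((0 : ℤ) : ℝ) • Ae 0
    simp
  | cons a t ih =>
    intro i hi1 hi2
    have ha : a ≤ m := hl a List.mem_cons_self
    have hl' : ∀ j ∈ t, j ≤ m := fun j hj => hl j (List.mem_cons_of_mem a hj)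
    have ihi := ih hl' i hi1 hi2
    obtain ⟨hp1, hp2⟩ := (Sst_mem m hm t hl').1 i hi1 hi2
    have hstep : ((List.map (As m) (a :: t)).prod) (Ae i)
        = As m a (((t.map (As m)).prod) (Ae i)) := by
      rw [List.map_cons, List.prod_cons]
      rfl
    rw [hstep, ihi, As_add_smul, As_AeZero]
    set p := (Sst m t).1 i with hp
    set k := (Sst m t).2 i with hk
    rw [Sst_cons]
    by_cases h0 : a = 0
    · subst h0
      by_cases hc1 : p = 1
      · rw [hc1, As0_col1 m hm]
        have e1 : (stepP m 0 (Sst m t)).1 i = m := by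
          simp only [stepP, reduceIte, ← hp, hc1]
        have e2 : (stepP m 0 (Sst m t)).2 i = k + 1 := by
          simp only [stepP, reduceIte, ← hp, ← hk, hc1]
        rw [e1, e2]
        push_cast
        funext u
        simp only [Pi.add_apply, Pi.smul_apply, smul_eq_mul]
        ring
      · by_cases hcm : p = m
        · rw [hcm, As0_colm m hm]
          have e1 : (stepP m 0 (Sst m t)).1 i = 1 := by
            simp only [stepP, reduceIte, ← hp, hcm, if_neg (by omega : ¬ m = 1)]
          have e2 : (stepP m 0 (Sst m t)).2 i = k - 1 := by
            simp only [stepP, reduceIte, ← hp, ← hk, hcm, if_neg (by omega : ¬ m = 1)]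
          rw [e1, e2]
          push_cast
          funext u
          simp only [Pi.add_apply, Pi.sub_apply, Pi.smul_apply, smul_eq_mul]
          ring
        · rw [As0_fix m p hm hp1 hp2 hc1 hcm]
          have e1 : (stepP m 0 (Sst m t)).1 i = p := by
            simp only [stepP, reduceIte, ← hp, if_neg hc1, if_neg hcm]
          have e2 : (stepP m 0 (Sst m t)).2 i = k := by
            simp only [stepP, reduceIte, ← hp, ← hk, if_neg hc1, if_neg hcm]
          rw [e1, e2]
    · have ha1 : 1 ≤ a := by omega
      by_cases hc1 : p = a
      · rw [hc1, As_col_swap1 m a ha1 ha]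
        have e1 : (stepP m a (Sst m t)).1 i = a + 1 := by
          simp only [stepP, if_neg h0, ← hp, hc1, reduceIte]
        have e2 : (stepP m a (Sst m t)).2 i = k := by
          simp only [stepP, if_neg h0, ← hk]
        rw [e1, e2]
      · by_cases hc2 : p = a + 1
        · rw [hc2, As_col_swap2 m a ha1 ha]
          have e1 : (stepP m a (Sst m t)).1 i = a := by
            simp only [stepP, if_neg h0, ← hp, hc2, if_neg (by omega : ¬ a + 1 = a),
              reduceIte]
          have e2 : (stepP m a (Sst m t)).2 i = k := by
            simp only [stepP, if_neg h0, ← hk]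
          rw [e1, e2]
        · rw [As_col_fix m a p ha1 ha hp1 hp2 hc1 hc2]
          have e1 : (stepP m a (Sst m t)).1 i = p := by
            simp only [stepP, if_neg h0, ← hp, if_neg hc1, if_neg hc2]
          have e2 : (stepP m a (Sst m t)).2 i = k := by
            simp only [stepP, if_neg h0, ← hk]
          rw [e1, e2]

end AuxAW

namespace AuxAW

def cc (m i : ℕ) : ℤ :=
  if i = m - 1 then (m : ℤ) + 2 else if i = m + 1 then 1 else (i : ℤ) + 2

def psi (m i pos : ℕ) (b : ℤ) : ℤ :=
  if i = m then
    (if pos = m + 1 then (if b = 1 then 0 else 2 + |(m : ℤ) - (m : ℤ) * b|)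
     else |(pos : ℤ) - (m : ℤ) * b| + 1)
  else
    (if pos = m + 1 then 1 + |(m : ℤ) - (m : ℤ) * b - cc m i|
     else |(pos : ℤ) - (m : ℤ) * b - cc m i|)

noncomputable def Phi (m : ℕ) (s : St) : ℤ :=
  ∑ i ∈ Finset.Icc 1 (m + 1), psi m i (s.1 i) (s.2 i)

lemma psi_circle (m i pos : ℕ) (b : ℤ) (him : i ≠ m) (hpos : pos ≠ m + 1) :
    psi m i pos b = |(pos : ℤ) - (m : ℤ) * b - cc m i| := by
  simp [psi, him, hpos]

lemma psi_circle_m (m pos : ℕ) (b : ℤ) (hpos : pos ≠ m + 1) :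
    psi m m pos b = |(pos : ℤ) - (m : ℤ) * b| + 1 := by
  simp [psi, hpos]

lemma psi_pend (m i : ℕ) (b : ℤ) (him : i ≠ m) :
    psi m i (m + 1) b = 1 + |(m : ℤ) - (m : ℤ) * b - cc m i| := by
  simp [psi, him]

lemma psi_pend_m (m : ℕ) (b : ℤ) :
    psi m m (m + 1) b = if b = 1 then 0 else 2 + |(m : ℤ) - (m : ℤ) * b| := by
  simp [psi]

lemma abs_succ_le (x : ℤ) : |x| ≤ |x + 1| + 1 := by
  rcases abs_cases x with ⟨h, _⟩ | ⟨h, _⟩ <;> rcases abs_cases (x + 1) with ⟨h2, _⟩ | ⟨h2, _⟩ <;>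
    omega

lemma abs_pred_le (x : ℤ) : |x| ≤ |x - 1| + 1 := by
  rcases abs_cases x with ⟨h, _⟩ | ⟨h, _⟩ <;> rcases abs_cases (x - 1) with ⟨h2, _⟩ | ⟨h2, _⟩ <;>
    omega

lemma abs_sub_one_le (x : ℤ) : |x - 1| ≤ |x| + 1 := by
  rcases abs_cases x with ⟨h, _⟩ | ⟨h, _⟩ <;> rcases abs_cases (x - 1) with ⟨h2, _⟩ | ⟨h2, _⟩ <;>
    omega

lemma abs_add_one_le (x : ℤ) : |x + 1| ≤ |x| + 1 := by
  rcases abs_cases x with ⟨h, _⟩ | ⟨h, _⟩ <;> rcases abs_cases (x + 1) with ⟨h2, _⟩ | ⟨h2, _⟩ <;>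
    omega

/-- `s_0` move, token at position 1 goes to position `m`, winding `b+1`. -/
lemma psi_lip0a (m i : ℕ) (hm : 1 < m) (b : ℤ) :
    psi m i 1 b ≤ psi m i m (b + 1) + 1 := by
  have h1 : (1 : ℕ) ≠ m + 1 := by omega
  have h2 : m ≠ m + 1 := by omega
  by_cases him : i = m
  · subst him
    rw [psi_circle_m _ _ _ h1, psi_circle_m _ _ _ h2]
    have e : (i : ℤ) - (i : ℤ) * (b + 1) = ((1 : ℕ) : ℤ) - (i : ℤ) * b - 1 := by
      push_cast; ring
    rw [e]
    have := abs_pred_le (((1 : ℕ) : ℤ) - (i : ℤ) * b)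
    omega
  · rw [psi_circle _ _ _ _ him h1, psi_circle _ _ _ _ him h2]
    have e : (m : ℤ) - (m : ℤ) * (b + 1) - cc m i = (((1 : ℕ) : ℤ) - (m : ℤ) * b - cc m i) - 1 := by
      push_cast; ring
    rw [e]
    exact abs_pred_le _

/-- `s_0` move, token at position `m` goes to position 1, winding `b-1`. -/
lemma psi_lip0b (m i : ℕ) (hm : 1 < m) (b : ℤ) :
    psi m i m b ≤ psi m i 1 (b - 1) + 1 := by
  have h1 : (1 : ℕ) ≠ m + 1 := by omega
  have h2 : m ≠ m + 1 := by omega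
  by_cases him : i = m
  · subst him
    rw [psi_circle_m _ _ _ h1, psi_circle_m _ _ _ h2]
    have e : ((1 : ℕ) : ℤ) - (i : ℤ) * (b - 1) = ((i : ℤ) - (i : ℤ) * b) + 1 := by
      push_cast; ring
    rw [e]
    have := abs_succ_le ((i : ℤ) - (i : ℤ) * b)
    omega
  · rw [psi_circle _ _ _ _ him h1, psi_circle _ _ _ _ him h2]
    have e : ((1 : ℕ) : ℤ) - (m : ℤ) * (b - 1) - cc m i = ((m : ℤ) - (m : ℤ) * b - cc m i) + 1 := by
      push_cast; ring
    rw [e]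
    exact abs_succ_le _

/-- swap move `s_a`, token at position `a` goes to `a+1`. -/
lemma psi_lipSa (m i a : ℕ) (hm : 1 < m) (ha1 : 1 ≤ a) (ha : a ≤ m) (b : ℤ) :
    psi m i a b ≤ psi m i (a + 1) b + 1 := by
  have h1 : a ≠ m + 1 := by omega
  by_cases ham : a = m
  · rw [ham]
    by_cases him : i = m
    · rw [him, psi_circle_m _ _ _ (by omega : m ≠ m + 1), psi_pend_m]
      by_cases hb : b = 1
      · rw [if_pos hb, hb]
        have e : (m : ℤ) - (m : ℤ) * 1 = 0 := by ring
        rw [e, abs_zero]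
      · rw [if_neg hb]
        have := abs_nonneg ((m : ℤ) - (m : ℤ) * b)
        omega
    · rw [psi_circle _ _ _ _ him (by omega : m ≠ m + 1), psi_pend _ _ _ him]
      have := abs_nonneg ((m : ℤ) - (m : ℤ) * b - cc m i)
      omega
  · have h2 : a + 1 ≠ m + 1 := by omega
    by_cases him : i = m
    · subst him
      rw [psi_circle_m _ _ _ h1, psi_circle_m _ _ _ h2]
      have e : ((a : ℤ)) - (i : ℤ) * b = (((a + 1 : ℕ) : ℤ) - (i : ℤ) * b) - 1 := by
        push_cast; ring
      rw [e]
      have := abs_sub_one_le (((a + 1 : ℕ) : ℤ) - (i : ℤ) * b)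
      omega
    · rw [psi_circle _ _ _ _ him h1, psi_circle _ _ _ _ him h2]
      have e : ((a : ℤ)) - (m : ℤ) * b - cc m i
          = (((a + 1 : ℕ) : ℤ) - (m : ℤ) * b - cc m i) - 1 := by
        push_cast; ring
      rw [e]
      exact abs_sub_one_le _

/-- swap move `s_a`, token at position `a+1` goes to `a`. -/
lemma psi_lipSb (m i a : ℕ) (hm : 1 < m) (ha1 : 1 ≤ a) (ha : a ≤ m) (b : ℤ) :
    psi m i (a + 1) b ≤ psi m i a b + 1 := by
  have h1 : a ≠ m + 1 := by omega
  by_cases ham : a = m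
  · rw [ham]
    by_cases him : i = m
    · rw [him, psi_pend_m, psi_circle_m _ _ _ (by omega : m ≠ m + 1)]
      by_cases hb : b = 1
      · rw [if_pos hb]
        have := abs_nonneg ((m : ℤ) - (m : ℤ) * b)
        omega
      · rw [if_neg hb]
        omega
    · rw [psi_pend _ _ _ him, psi_circle _ _ _ _ him (by omega : m ≠ m + 1)]
      omega
  · have h2 : a + 1 ≠ m + 1 := by omega
    by_cases him : i = m
    · subst him
      rw [psi_circle_m _ _ _ h1, psi_circle_m _ _ _ h2]
      have e : ((a + 1 : ℕ) : ℤ) - (i : ℤ) * b = ((a : ℤ) - (i : ℤ) * b) + 1 := by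
        push_cast; ring
      rw [e]
      have := abs_add_one_le ((a : ℤ) - (i : ℤ) * b)
      omega
    · rw [psi_circle _ _ _ _ him h1, psi_circle _ _ _ _ him h2]
      have e : ((a + 1 : ℕ) : ℤ) - (m : ℤ) * b - cc m i
          = ((a : ℤ) - (m : ℤ) * b - cc m i) + 1 := by
        push_cast; ring
      rw [e]
      have := abs_add_one_le ((a : ℤ) - (m : ℤ) * b - cc m i)
      omega

end AuxAW

namespace AuxAW

lemma sum_ind_le (m : ℕ) (s : St) (h2 : ∀ x y, s.1 x = s.1 y → x = y) (b1 b2 : ℕ) :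
    (∑ i ∈ Finset.Icc 1 (m + 1), if s.1 i = b1 ∨ s.1 i = b2 then (1 : ℤ) else 0) ≤ 2 := by
  classical
  rw [Finset.sum_boole]
  have hle : (Finset.filter (fun i => s.1 i = b1 ∨ s.1 i = b2)
      (Finset.Icc 1 (m + 1))).card ≤ ({b1, b2} : Finset ℕ).card := by
    apply Finset.card_le_card_of_injOn s.1
    · intro x hx
      rw [Finset.mem_coe, Finset.mem_filter] at hx
      rcases hx.2 with h | h <;> simp [h]
    · intro x _ y _ hxy
      exact h2 x y hxy
  have h2' : ({b1, b2} : Finset ℕ).card ≤ 2 := by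
    apply le_trans (Finset.card_insert_le b1 {b2})
    simp
  exact_mod_cast le_trans hle h2'

lemma step_phi (m : ℕ) (hm : 1 < m) (a : ℕ) (ha : a ≤ m) (s : St)
    (h2 : ∀ x y, s.1 x = s.1 y → x = y) :
    Phi m s ≤ Phi m (stepP m a s) + 2 := by
  classical
  by_cases h0 : a = 0
  · subst h0
    have key : ∀ i ∈ Finset.Icc 1 (m + 1),
        psi m i (s.1 i) (s.2 i)
          ≤ psi m i ((stepP m 0 s).1 i) ((stepP m 0 s).2 i)
            + (if s.1 i = 1 ∨ s.1 i = m then (1 : ℤ) else 0) := by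
      intro i _
      by_cases hc1 : s.1 i = 1
      · have e1 : (stepP m 0 s).1 i = m := by simp [stepP, hc1]
        have e2 : (stepP m 0 s).2 i = s.2 i + 1 := by simp [stepP, hc1]
        rw [e1, e2, hc1, if_pos (Or.inl rfl)]
        exact psi_lip0a m i hm (s.2 i)
      · by_cases hcm : s.1 i = m
        · have hm1 : ¬ (m = 1) := by omega
          have e1 : (stepP m 0 s).1 i = 1 := by simp [stepP, if_neg hc1, hcm, hm1]
          have e2 : (stepP m 0 s).2 i = s.2 i - 1 := by simp [stepP, if_neg hc1, hcm, hm1]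
          rw [e1, e2, hcm, if_pos (Or.inr rfl)]
          exact psi_lip0b m i hm (s.2 i)
        · have e1 : (stepP m 0 s).1 i = s.1 i := by simp [stepP, if_neg hc1, if_neg hcm]
          have e2 : (stepP m 0 s).2 i = s.2 i := by simp [stepP, if_neg hc1, if_neg hcm]
          rw [e1, e2, if_neg (by tauto)]
          omega
    have hsum := Finset.sum_le_sum key
    rw [Finset.sum_add_distrib] at hsum
    have hcard := sum_ind_le m s h2 1 m
    unfold Phi
    omega
  · have ha1 : 1 ≤ a := by omega
    have key : ∀ i ∈ Finset.Icc 1 (m + 1),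
        psi m i (s.1 i) (s.2 i)
          ≤ psi m i ((stepP m a s).1 i) ((stepP m a s).2 i)
            + (if s.1 i = a ∨ s.1 i = a + 1 then (1 : ℤ) else 0) := by
      intro i _
      have e2 : (stepP m a s).2 i = s.2 i := by simp [stepP, if_neg h0]
      by_cases hc1 : s.1 i = a
      · have e1 : (stepP m a s).1 i = a + 1 := by simp [stepP, if_neg h0, hc1]
        rw [e1, e2, hc1, if_pos (Or.inl rfl)]
        exact psi_lipSa m i a hm ha1 ha (s.2 i)
      · by_cases hc2 : s.1 i = a + 1
        · have e1 : (stepP m a s).1 i = a := by simp [stepP, if_neg h0, if_neg hc1, hc2]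
          rw [e1, e2, hc2, if_pos (Or.inr rfl)]
          exact psi_lipSb m i a hm ha1 ha (s.2 i)
        · have e1 : (stepP m a s).1 i = s.1 i := by
            simp [stepP, if_neg h0, if_neg hc1, if_neg hc2]
          rw [e1, e2, if_neg (by tauto)]
          omega
    have hsum := Finset.sum_le_sum key
    rw [Finset.sum_add_distrib] at hsum
    have hcard := sum_ind_le m s h2 a (a + 1)
    unfold Phi
    omega

lemma phi_descent (m : ℕ) (hm : 1 < m) (l : List ℕ) (hl : ∀ j ∈ l, j ≤ m) :
    Phi m (Sst m []) ≤ Phi m (Sst m l) + 2 * l.length := by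
  induction l with
  | nil => simp
  | cons a t ih =>
    have hl' : ∀ j ∈ t, j ≤ m := fun j hj => hl j (List.mem_cons_of_mem a hj)
    have ih' := ih hl'
    have hstep := step_phi m hm a (hl a List.mem_cons_self) (Sst m t)
      (Sst_mem m hm t hl').2
    rw [Sst_cons]
    simp only [List.length_cons]
    push_cast
    omega

end AuxAW

namespace AuxAW

lemma phi_init (m : ℕ) (hm : 1 < m) : 4 * (m : ℤ) ≤ Phi m (Sst m []) := by
  have hpt : ∀ i ∈ Finset.Icc 1 (m + 1), psi m i ((Sst m []).1 i) ((Sst m []).2 i)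
      = 2 + (if i = m then (m : ℤ) - 1 else 0) + (if i = m + 1 then (m : ℤ) - 2 else 0)
        + (if i = m - 1 then 1 else 0) := by
    intro i hi
    rw [Finset.mem_Icc] at hi
    have e1 : (Sst m []).1 i = i := rfl
    have e2 : (Sst m []).2 i = 0 := rfl
    rw [e1, e2]
    by_cases hc : i = m
    · subst hc
      rw [psi_circle_m _ _ _ (by omega), if_pos rfl, if_neg (by omega), if_neg (by omega)]
      rw [show (i : ℤ) - (i : ℤ) * 0 = (i : ℤ) from by ring, abs_of_nonneg (by positivity)]
      ring
    · by_cases hc2 : i = m + 1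
      · subst hc2
        rw [show m + 1 = m + 1 from rfl] at *
        rw [psi_pend _ _ _ (by omega : m + 1 ≠ m)]
        rw [show cc m (m + 1) = 1 from by unfold cc; rw [if_neg (by omega), if_pos rfl]]
        rw [show (m : ℤ) - (m : ℤ) * 0 - 1 = (m : ℤ) - 1 from by ring,
          abs_of_nonneg (by omega : (0 : ℤ) ≤ (m : ℤ) - 1)]
        rw [if_neg (by omega), if_pos rfl, if_neg (by omega)]
        ring
      · by_cases hc3 : i = m - 1
        · rw [psi_circle _ _ _ _ hc (by omega), if_neg hc, if_neg hc2, if_pos hc3]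
          rw [show cc m i = (m : ℤ) + 2 from by unfold cc; rw [if_pos hc3]]
          rw [show (i : ℤ) - (m : ℤ) * 0 - ((m : ℤ) + 2) = -3 from by
            have : (i : ℤ) = (m : ℤ) - 1 := by omega
            rw [this]; ring]
          norm_num
        · rw [psi_circle _ _ _ _ hc (by omega), if_neg hc, if_neg hc2, if_neg hc3]
          rw [show cc m i = (i : ℤ) + 2 from by unfold cc; rw [if_neg hc3, if_neg (by omega)]]
          rw [show (i : ℤ) - (m : ℤ) * 0 - ((i : ℤ) + 2) = -2 from by ring]
          norm_num
  rw [Phi, Finset.sum_congr rfl hpt]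
  rw [Finset.sum_add_distrib, Finset.sum_add_distrib, Finset.sum_add_distrib]
  rw [Finset.sum_ite_eq' (Finset.Icc 1 (m + 1)) m (fun _ => (m : ℤ) - 1),
    Finset.sum_ite_eq' (Finset.Icc 1 (m + 1)) (m + 1) (fun _ => (m : ℤ) - 2),
    Finset.sum_ite_eq' (Finset.Icc 1 (m + 1)) (m - 1) (fun _ => (1 : ℤ))]
  rw [if_pos (by rw [Finset.mem_Icc]; omega), if_pos (by rw [Finset.mem_Icc]; omega),
    if_pos (by rw [Finset.mem_Icc]; omega)]
  rw [Finset.sum_const, Nat.card_Icc, nsmul_eq_mul]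
  push_cast
  omega

lemma fold_range' (m : ℕ) : ∀ (n j : ℕ), 1 ≤ j → ∀ (s : St),
    (List.range' j n).foldr (stepP m) s
      = (fun i => if j ≤ s.1 i ∧ s.1 i < j + n then s.1 i + 1
                  else if s.1 i = j + n ∧ 0 < n then j else s.1 i, s.2) := by
  intro n
  induction n with
  | zero =>
    intro j hj s
    simp only [List.range'_zero, List.foldr_nil]
    refine Prod.ext ?_ rfl
    funext i
    dsimp only
    split_ifs <;> omega
  | succ n ih =>
    intro j hj s
    rw [List.range'_succ, List.foldr_cons, ih (j + 1) (by omega) s]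
    have hj0 : ¬ j = 0 := by omega
    simp only [stepP, if_neg hj0]
    refine Prod.ext ?_ rfl
    funext i
    dsimp only
    split_ifs <;> omega

lemma Sst_Aword_eq (m : ℕ) (hm : 1 < m) :
    Sst m (Aword m)
      = (fun i => if 1 ≤ i ∧ i ≤ m - 2 then i + 2
                  else if i = m - 1 then 2
                  else if i = m then m + 1
                  else if i = m + 1 then 1 else i,
         fun i => if i = m - 1 then -1 else if i = m then 1 else 0) := by
  have hmap : (List.range m).map (· + 1) = List.range' 1 m := by
    rw [List.range'_eq_map_range]
    apply List.map_congr_left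
    intro a _
    omega
  have hrange : List.range m = 0 :: List.range' 1 (m - 1) := by
    rw [List.range_eq_range']
    have h := List.range'_succ (s := 0) (n := m - 1) (step := 1)
    rw [show m - 1 + 1 = m from by omega] at h
    simpa using h
  rw [Sst, Aword, List.foldr_append, hmap, hrange, List.foldr_cons]
  rw [fold_range' m (m - 1) 1 le_rfl, fold_range' m m 1 le_rfl]
  have hm1 : ¬ (m = 1) := by omega
  refine Prod.ext ?_ ?_
  · funext i
    simp only [stepP, reduceIte, id_eq]
    split_ifs <;> omega
  · funext i
    simp only [stepP, reduceIte, id_eq]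
    split_ifs <;> omega

lemma phi_target (m : ℕ) (hm : 1 < m) : Phi m (Sst m (Aword m)) = 0 := by
  rw [Sst_Aword_eq m hm, Phi]
  apply Finset.sum_eq_zero
  intro i hi
  rw [Finset.mem_Icc] at hi
  dsimp only
  by_cases h1 : 1 ≤ i ∧ i ≤ m - 2
  · rw [if_pos h1, if_neg (by omega : ¬ i = m - 1), if_neg (by omega : ¬ i = m)]
    rw [psi_circle _ _ _ _ (by omega) (by omega)]
    rw [show cc m i = (i : ℤ) + 2 from by unfold cc; rw [if_neg (by omega), if_neg (by omega)]]
    rw [show ((i + 2 : ℕ) : ℤ) - (m : ℤ) * 0 - ((i : ℤ) + 2) = 0 from by push_cast; ring]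
    exact abs_zero
  · by_cases h2 : i = m - 1
    · rw [if_neg h1, if_pos h2, if_pos h2]
      rw [psi_circle _ _ _ _ (by omega) (by omega)]
      rw [show cc m i = (m : ℤ) + 2 from by unfold cc; rw [if_pos h2]]
      rw [show ((2 : ℕ) : ℤ) - (m : ℤ) * (-1) - ((m : ℤ) + 2) = 0 from by push_cast; ring]
      exact abs_zero
    · by_cases h3 : i = m
      · rw [if_neg h1, if_neg h2, if_pos h3, if_neg h2, if_pos h3, h3]
        rw [psi_pend_m]
        rw [if_pos rfl]
      · have h4 : i = m + 1 := by omega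
        rw [if_neg h1, if_neg h2, if_neg h3, if_pos h4, if_neg h2, if_neg h3]
        rw [psi_circle _ _ _ _ (by omega) (by omega)]
        rw [show cc m i = 1 from by unfold cc; rw [if_neg (by omega), if_pos h4]]
        rw [show ((1 : ℕ) : ℤ) - (m : ℤ) * 0 - 1 = 0 from by push_cast; ring]
        exact abs_zero

end AuxAW


/-- The element `ĉ_m = (s_1 ⋯ s_m)(s_0 s_1 ⋯ s_{m-1})` of the affine Weyl
group `W(Â_m)` has length `2m`; i.e., the given expression is reduced. -/
theorem Aword_reduced (m : ℕ) (hm : 1 < m) :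
    (Aword m).length = 2 * m ∧
    ∀ l : List ℕ, (∀ j ∈ l, j ≤ m) →
      (l.map (As m)).prod = ((Aword m).map (As m)).prod →
      2 * m ≤ l.length := by
  constructor
  · simp [Aword]
    omega
  · intro l hl hprod
    have hw : ∀ j ∈ Aword m, j ≤ m := by
      intro j hj
      rw [Aword, List.mem_append] at hj
      rcases hj with hj | hj
      · simp only [List.mem_map, List.mem_range] at hj
        obtain ⟨x, hx, rfl⟩ := hj
        omega
      · rw [List.mem_range] at hj
        omega
    have c1 := AuxAW.cols m hm l hl
    have c2 := AuxAW.cols m hm (Aword m) hw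
    have hstate : ∀ i, 1 ≤ i → i ≤ m + 1 →
        (AuxAW.Sst m l).1 i = (AuxAW.Sst m (Aword m)).1 i ∧
        (AuxAW.Sst m l).2 i = (AuxAW.Sst m (Aword m)).2 i := by
      intro i hi1 hi2
      have h : Ae ((AuxAW.Sst m l).1 i) + (((AuxAW.Sst m l).2 i : ℤ) : ℝ) • Ae 0
          = Ae ((AuxAW.Sst m (Aword m)).1 i)
            + (((AuxAW.Sst m (Aword m)).2 i : ℤ) : ℝ) • Ae 0 := by
        rw [← c1 i hi1 hi2, ← c2 i hi1 hi2, hprod]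
      obtain ⟨hp1, hp2⟩ := (AuxAW.Sst_mem m hm l hl).1 i hi1 hi2
      obtain ⟨hq1, hq2⟩ := (AuxAW.Sst_mem m hm (Aword m) hw).1 i hi1 hi2
      set p := (AuxAW.Sst m l).1 i
      set q := (AuxAW.Sst m (Aword m)).1 i
      set kp := (AuxAW.Sst m l).2 i
      set kq := (AuxAW.Sst m (Aword m)).2 i
      have h0 := congrFun h 0
      have hq := congrFun h q
      simp only [Pi.add_apply, Pi.smul_apply, smul_eq_mul, Ae, eq_self_iff_true, if_true,
        if_neg (by omega : ¬ (0 : ℕ) = p), if_neg (by omega : ¬ (0 : ℕ) = q),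
        if_neg (by omega : ¬ q = 0)] at h0 hq
      have hk : kp = kq := by
        have hr : (kp : ℝ) = (kq : ℝ) := by linarith
        exact_mod_cast hr
      have hpq : p = q := by
        by_contra hne
        rw [if_neg (by omega : ¬ q = p)] at hq
        norm_num at hq
      exact ⟨hpq, hk⟩
    have hphi : AuxAW.Phi m (AuxAW.Sst m l) = AuxAW.Phi m (AuxAW.Sst m (Aword m)) := by
      apply Finset.sum_congr rfl
      intro i hi
      rw [Finset.mem_Icc] at hi
      rw [(hstate i hi.1 hi.2).1, (hstate i hi.1 hi.2).2]
    have hd := AuxAW.phi_descent m hm l hl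
    rw [hphi, AuxAW.phi_target m hm] at hd
    have hinit := AuxAW.phi_init m hm
    have : 4 * (m : ℤ) ≤ 2 * (l.length : ℤ) := by omega
    omega
end
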